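/- Let H be a tournament. The class of H-free tournaments is χ⃗-bounded if and only if the class of ordered undirected graphs containing no ordered backedge graph of H as an induced ordered subgraph is χ-bounded (i.e., there exists a function f such that χ(G) ≤ f(ω(G)) for every ordered graph (G, ≺) in that class). -/

import Mathlib

structure Dig (V : Type*) where
  Adj : V → V → Prop
  irrefl : ∀ v, ¬ Adj v v
  asymm : ∀ u v, Adj u v → ¬ Adj v u

structure Tournament (V : Type*) extends Dig V where
  total : ∀ u v, u ≠ v → Adj u v ∨ Adj v u

variable {V : Type*}

/-- The backedge graph of a digraph with respect to a (strict total) order `r`: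
`u` and `v` are adjacent iff the arc between them goes backwards with respect to `r`. -/
def Dig.backedge (D : Dig V) (r : V → V → Prop) : SimpleGraph V where
  Adj u v := (r u v ∧ D.Adj v u) ∨ (r v u ∧ D.Adj u v)
  symm := ⟨by intro u v h; tauto⟩
  loopless := ⟨by intro v h; rcases h with ⟨_, h⟩ | ⟨_, h⟩ <;> exact D.irrefl v h⟩

/-- The clique number of an undirected graph. -/
noncomputable def gOmega (G : SimpleGraph V) : ℕ :=
  sSup {n | ∃ s : Finset V, G.IsNClique n s}

/-- The chromatic number of an undirected graph (as a natural number). -/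
noncomputable def gChi (G : SimpleGraph V) : ℕ :=
  sInf {n | G.Colorable n}

/-- The sub-digraph induced on `S` is acyclic: there is no directed cycle inside `S`. -/
def Dig.AcyclicOn (D : Dig V) (S : Set V) : Prop :=
  ∀ v, ¬ Relation.TransGen (fun x y => x ∈ S ∧ y ∈ S ∧ D.Adj x y) v v

/-- The dichromatic number: the least `n` such that the vertices can be partitioned into
`n` acyclic parts. -/
noncomputable def Dig.dichi (D : Dig V) : ℕ :=
  sInf {n | ∃ c : V → Fin n, ∀ i, D.AcyclicOn {v | c v = i}}

/-- The clique number of a digraph: the minimum over all strict total orders of the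
clique number of the associated backedge graph. -/
noncomputable def Dig.cliqueNum (D : Dig V) : ℕ :=
  sInf {m | ∃ r : V → V → Prop, IsStrictTotalOrder V r ∧ gOmega (D.backedge r) = m}

/-- `T` is `H`-free: no induced subtournament of `T` is isomorphic to `H`. -/
def HFree {W V : Type*} (H : Tournament W) (T : Tournament V) : Prop :=
  ¬ ∃ f : W ↪ V, ∀ a b, H.Adj a b ↔ T.Adj (f a) (f b)

/-- `H` is χ⃗-binding: the class of `H`-free tournaments is χ⃗-bounded. -/
def ChiBinding {W : Type*} (H : Tournament W) : Prop :=
  ∃ f : ℕ → ℕ, ∀ (V : Type) [Fintype V] (T : Tournament V), HFree H T →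
    T.toDig.dichi ≤ f T.toDig.cliqueNum

/-- The ordered graph `(G, r)` contains the ordered graph `(G', r')` as an induced ordered
subgraph. -/
def OrderedContains {W V : Type*} (G' : SimpleGraph W) (r' : W → W → Prop)
    (G : SimpleGraph V) (r : V → V → Prop) : Prop :=
  ∃ φ : W ↪ V, (∀ a b, r' a b ↔ r (φ a) (φ b)) ∧ (∀ a b, G'.Adj a b ↔ G.Adj (φ a) (φ b))

/- ==================== auxiliary lemmas ==================== -/

lemma sto_asymm {r : V → V → Prop} (h : IsStrictTotalOrder V r) {u v : V}
    (huv : r u v) : ¬ r v u :=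
  fun hvu => h.irrefl u (h.trans _ _ _ huv hvu)

lemma sto_trich {r : V → V → Prop} (h : IsStrictTotalOrder V r) (a b : V) :
    r a b ∨ a = b ∨ r b a := by
  by_cases h1 : r a b
  · exact Or.inl h1
  by_cases h2 : r b a
  · exact Or.inr (Or.inr h2)
  exact Or.inr (Or.inl (h.trichotomous a b h1 h2))

lemma gOmega_bddAbove [Fintype V] (G : SimpleGraph V) :
    BddAbove {n | ∃ s : Finset V, G.IsNClique n s} :=
  ⟨Fintype.card V, fun n ⟨s, hs⟩ => by rw [← hs.card_eq]; exact s.card_le_univ⟩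

lemma le_gOmega [Fintype V] {G : SimpleGraph V} {n : ℕ} {s : Finset V}
    (h : G.IsNClique n s) : n ≤ gOmega G :=
  le_csSup (gOmega_bddAbove G) ⟨s, h⟩

lemma gChi_colorable [Fintype V] (G : SimpleGraph V) : G.Colorable (gChi G) := by
  have : gChi G ∈ {n | G.Colorable n} :=
    Nat.sInf_mem ⟨Fintype.card V, G.colorable_of_fintype⟩
  exact this

lemma gChi_le {G : SimpleGraph V} {n : ℕ} (h : G.Colorable n) : gChi G ≤ n :=
  Nat.sInf_le h

/-- some strict total order on a finite type -/
lemma exists_sto [Fintype V] : ∃ r : V → V → Prop, IsStrictTotalOrder V r := by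
  classical
  obtain ⟨e⟩ := Fintype.truncEquivFin V |>.nonempty
  letI : LinearOrder V := LinearOrder.lift' e e.injective
  exact ⟨(· < ·), inferInstance⟩

/-- coloring of backedge graph gives acyclic partition -/
lemma acyclic_of_coloring (T : Tournament V) {r : V → V → Prop}
    (hr : IsStrictTotalOrder V r) {n : ℕ} (C : (T.toDig.backedge r).Coloring (Fin n)) :
    ∀ i, T.toDig.AcyclicOn {v | C v = i} := by
  intro i v hv
  have hsub : ∀ x y, (x ∈ {v | C v = i} ∧ y ∈ {v | C v = i} ∧ T.Adj x y) → r x y := by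
    rintro x y ⟨hx, hy, hadj⟩
    have hxy : x ≠ y := fun h => T.irrefl x (h ▸ hadj)
    rcases sto_trich hr x y with h | h | h
    · exact h
    · exact absurd h hxy
    · exact absurd (hx.trans hy.symm) (C.valid (Or.inr ⟨h, hadj⟩))
  have := Relation.TransGen.mono hsub _ _ hv
  rw [@Relation.transGen_eq_self _ _ (letI := hr; inferInstance)] at this
  exact hr.irrefl v this

lemma dichi_le_gChi_backedge [Fintype V] (T : Tournament V) {r : V → V → Prop}
    (hr : IsStrictTotalOrder V r) :
    T.toDig.dichi ≤ gChi (T.toDig.backedge r) := by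
  obtain ⟨C⟩ := gChi_colorable (T.toDig.backedge r)
  exact Nat.sInf_le ⟨C, acyclic_of_coloring T hr C⟩

/-- tournament from an ordered graph: backward arcs exactly at edges -/
def ofOrdered (G : SimpleGraph V) (r : V → V → Prop) (h : IsStrictTotalOrder V r) :
    Tournament V where
  Adj u v := (r u v ∧ ¬ G.Adj u v) ∨ (r v u ∧ G.Adj u v)
  irrefl v := by rintro (⟨h1, _⟩ | ⟨h1, _⟩) <;> exact h.irrefl v h1
  asymm u v := by
    rintro (⟨h1, h2⟩ | ⟨h1, h2⟩) (⟨h3, h4⟩ | ⟨h3, h4⟩)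
    · exact sto_asymm h h1 h3
    · exact h2 h4.symm
    · exact h4 h2.symm
    · exact sto_asymm h h1 h3
  total u v hne := by
    rcases sto_trich h u v with h1 | h1 | h1
    · by_cases hG : G.Adj u v
      · exact Or.inr (Or.inr ⟨h1, hG.symm⟩)
      · exact Or.inl (Or.inl ⟨h1, hG⟩)
    · exact absurd h1 hne
    · by_cases hG : G.Adj v u
      · exact Or.inl (Or.inr ⟨h1, hG.symm⟩)
      · exact Or.inr (Or.inl ⟨h1, hG⟩)

lemma backedge_ofOrdered (G : SimpleGraph V) (r : V → V → Prop)
    (h : IsStrictTotalOrder V r) : (ofOrdered G r h).toDig.backedge r = G := by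
  ext u v
  constructor
  · rintro (⟨h1, (⟨h2, h3⟩ | ⟨h2, h3⟩)⟩ | ⟨h1, (⟨h2, h3⟩ | ⟨h2, h3⟩)⟩)
    · exact absurd h1 (sto_asymm h h2)
    · exact h3.symm
    · exact absurd h1 (sto_asymm h h2)
    · exact h3
  · intro hG
    rcases sto_trich h u v with h1 | h1 | h1
    · exact Or.inl ⟨h1, Or.inr ⟨h1, hG.symm⟩⟩
    · exact absurd h1 hG.ne
    · exact Or.inr ⟨h1, Or.inr ⟨h1, hG⟩⟩

lemma backedge_adj (D : Dig V) (r : V → V → Prop) (u v : V) :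
    (D.backedge r).Adj u v ↔ (r u v ∧ D.Adj v u) ∨ (r v u ∧ D.Adj u v) := Iff.rfl

lemma mkSTO {r : V → V → Prop} (h1 : ∀ a b, a ≠ b → r a b ∨ r b a)
    (h2 : ∀ a, ¬ r a a) (h3 : ∀ a b c, r a b → r b c → r a c) :
    IsStrictTotalOrder V r :=
  { trichotomous := fun a b hab hba => by
      by_contra hne
      rcases h1 a b hne with h | h
      · exact hab h
      · exact hba h
    irrefl := h2
    trans := h3 }

/-- If `T` is `H`-free then its backedge graph avoids all ordered backedge graphs of `H`. -/
lemma avoid_of_hfree {W : Type*} (H : Tournament W) (T : Tournament V)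
    {r : V → V → Prop} (hr : IsStrictTotalOrder V r) (hfree : HFree H T) :
    ¬ ∃ rH : W → W → Prop, IsStrictTotalOrder W rH ∧
        OrderedContains (H.toDig.backedge rH) rH (T.toDig.backedge r) r := by
  rintro ⟨rH, hrH, φ, hord, hadj⟩
  apply hfree
  refine ⟨φ, fun a b => ?_⟩
  rcases eq_or_ne a b with rfl | hne
  · exact iff_of_false (H.irrefl a) (T.irrefl _)
  have hne' : φ a ≠ φ b := fun e => hne (φ.injective e)
  have hB := (hadj a b).trans (backedge_adj _ _ _ _)
  rw [backedge_adj] at hB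
  rcases sto_trich hrH a b with h1 | h1 | h1
  · have h2 : r (φ a) (φ b) := (hord a b).mp h1
    have h3 : ¬ rH b a := sto_asymm hrH h1
    have h4 : ¬ r (φ b) (φ a) := sto_asymm hr h2
    have key : H.Adj b a ↔ T.Adj (φ b) (φ a) := by
      constructor
      · intro hh
        rcases hB.mp (Or.inl ⟨h1, hh⟩) with ⟨_, t⟩ | ⟨hr', _⟩
        · exact t
        · exact absurd hr' h4
      · intro hh
        rcases hB.mpr (Or.inl ⟨h2, hh⟩) with ⟨_, t⟩ | ⟨hr', _⟩
        · exact t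
        · exact absurd hr' h3
    constructor
    · intro hh
      rcases T.total (φ a) (φ b) hne' with t | t
      · exact t
      · exact absurd hh (H.asymm b a (key.mpr t))
    · intro hh
      rcases H.total a b hne with t | t
      · exact t
      · exact absurd hh (T.asymm (φ b) (φ a) (key.mp t))
  · exact absurd h1 hne
  · have h2 : r (φ b) (φ a) := (hord b a).mp h1
    have h3 : ¬ rH a b := sto_asymm hrH h1
    have h4 : ¬ r (φ a) (φ b) := sto_asymm hr h2
    constructor
    · intro hh
      rcases hB.mp (Or.inr ⟨h1, hh⟩) with ⟨hr', _⟩ | ⟨_, t⟩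
      · exact absurd hr' h4
      · exact t
    · intro hh
      rcases hB.mpr (Or.inr ⟨h2, hh⟩) with ⟨hr', _⟩ | ⟨_, t⟩
      · exact absurd hr' h3
      · exact t

/-- If the ordered graph `(G, r)` avoids all ordered backedge graphs of `H`, then the
associated tournament is `H`-free. -/
lemma hfree_ofOrdered {W : Type*} (H : Tournament W) (G : SimpleGraph V)
    {r : V → V → Prop} (hr : IsStrictTotalOrder V r)
    (havoid : ¬ ∃ rH : W → W → Prop, IsStrictTotalOrder W rH ∧
        OrderedContains (H.toDig.backedge rH) rH G r) :
    HFree H (ofOrdered G r hr) := by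
  rintro ⟨f, hf⟩
  apply havoid
  refine ⟨fun a b => r (f a) (f b), ?_, f, fun a b => Iff.rfl, fun a b => ?_⟩
  · refine mkSTO (fun a b hne => ?_) (fun a => hr.irrefl (f a))
      (fun a b c h1 h2 => hr.trans _ _ _ h1 h2)
    rcases sto_trich hr (f a) (f b) with h | h | h
    · exact Or.inl h
    · exact absurd (f.injective h) hne
    · exact Or.inr h
  · rw [← backedge_ofOrdered G r hr]
    rw [backedge_adj, backedge_adj]
    exact or_congr (and_congr Iff.rfl (hf b a)) (and_congr Iff.rfl (hf a b))

section ChiKey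

variable [Fintype V] (G : SimpleGraph V) (r : V → V → Prop) (hr : IsStrictTotalOrder V r)
  {k : ℕ} (c : V → Fin k)

/-- cliques ending at `v`, inside `v`'s color class, with `v` as `r`-maximum -/
def cliqueSet (v : V) : Set ℕ :=
  {n | ∃ s : Finset V, G.IsNClique n s ∧ v ∈ s ∧ (∀ x ∈ s, c x = c v) ∧
    ∀ x ∈ s, x ≠ v → r x v}

noncomputable def hgt (v : V) : ℕ := sSup (cliqueSet G r c v)

lemma one_mem_cliqueSet (v : V) : 1 ∈ cliqueSet G r c v := by
  refine ⟨{v}, ?_, Finset.mem_singleton_self v, ?_, ?_⟩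
  · exact SimpleGraph.isNClique_singleton.mpr rfl
  · intro x hx; rw [Finset.mem_singleton] at hx; rw [hx]
  · intro x hx hne; rw [Finset.mem_singleton] at hx; exact absurd hx hne

lemma cliqueSet_bdd (v : V) : BddAbove (cliqueSet G r c v) :=
  ⟨Fintype.card V, fun n ⟨s, hs, _⟩ => by rw [← hs.card_eq]; exact s.card_le_univ⟩

lemma hgt_mem (v : V) : hgt G r c v ∈ cliqueSet G r c v :=
  Nat.sSup_mem ⟨1, one_mem_cliqueSet G r c v⟩ (cliqueSet_bdd G r c v)

lemma hgt_le (v : V) : hgt G r c v ≤ gOmega G := by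
  obtain ⟨s, hs, -⟩ := hgt_mem G r c v
  exact le_gOmega hs

lemma one_le_hgt (v : V) : 1 ≤ hgt G r c v :=
  le_csSup (cliqueSet_bdd G r c v) (one_mem_cliqueSet G r c v)

lemma hgt_lt (hc : ∀ i, (ofOrdered G r hr).toDig.AcyclicOn {v | c v = i})
    {u v : V} (hcc : c u = c v) (huv : r u v) (hadj : G.Adj u v) :
    hgt G r c u < hgt G r c v := by
  classical
  set T := ofOrdered G r hr with hT
  have hBE := backedge_ofOrdered G r hr
  have hne : u ≠ v := fun e => hr.irrefl u (e ▸ huv)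
  obtain ⟨s, hclq, hus, hcls, hmax⟩ := hgt_mem G r c u
  have hvns : v ∉ s := fun hv =>
    sto_asymm hr huv (hmax v hv hne.symm)
  -- T.Adj v u from the backedge structure
  have hTvu : T.Adj v u := by
    have : (T.toDig.backedge r).Adj u v := by rw [hBE]; exact hadj
    rcases this with ⟨_, t⟩ | ⟨h', _⟩
    · exact t
    · exact absurd h' (sto_asymm hr huv)
  have key : ∀ x ∈ s, x ≠ v → G.Adj v x := by
    intro x hxs hxv
    rcases eq_or_ne x u with rfl | hxu
    · exact hadj.symm
    · have hxr : r x u := hmax x hxs hxu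
      have hGxu : G.Adj x u := hclq.1 hxs hus hxu
      have hTux : T.Adj u x := by
        have : (T.toDig.backedge r).Adj x u := by rw [hBE]; exact hGxu
        rcases this with ⟨_, t⟩ | ⟨h', _⟩
        · exact t
        · exact absurd h' (sto_asymm hr hxr)
      -- memberships in the color class of u
      have hxc : c x = c u := hcls x hxs
      have hSv : v ∈ {y | c y = c u} := hcc.symm
      have hSu : u ∈ {y | c y = c u} := rfl
      have hSx : x ∈ {y | c y = c u} := hxc
      have hTvx : T.Adj v x := by
        rcases T.total v x hxv.symm with t | t
        · exact t
        · exfalso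
          apply hc (c u) v
          exact Relation.TransGen.head ⟨hSv, hSu, hTvu⟩
            (Relation.TransGen.head ⟨hSu, hSx, hTux⟩
              (Relation.TransGen.single ⟨hSx, hSv, t⟩))
      have hrxv : r x v := hr.trans _ _ _ hxr huv
      have : (T.toDig.backedge r).Adj x v := Or.inl ⟨hrxv, hTvx⟩
      rw [hBE] at this
      exact this.symm
  have hmem : hgt G r c u + 1 ∈ cliqueSet G r c v := by
    refine ⟨insert v s, ?_, Finset.mem_insert_self v s, ?_, ?_⟩
    · constructor
      · rw [Finset.coe_insert]
        exact hclq.1.insert (fun b hb hbv => key b hb (fun e => hbv e.symm))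
      · rw [Finset.card_insert_of_notMem hvns, hclq.card_eq]
    · intro x hx
      rcases Finset.mem_insert.mp hx with rfl | hx
      · rfl
      · exact (hcls x hx).trans hcc
    · intro x hx hxv
      rcases Finset.mem_insert.mp hx with rfl | hx
      · exact absurd rfl hxv
      · rcases eq_or_ne x u with rfl | hxu
        · exact huv
        · exact hr.trans _ _ _ (hmax x hx hxu) huv
  calc hgt G r c u < hgt G r c u + 1 := Nat.lt_succ_self _
    _ ≤ hgt G r c v := le_csSup (cliqueSet_bdd G r c v) hmem

lemma chi_key (hc : ∀ i, (ofOrdered G r hr).toDig.AcyclicOn {v | c v = i}) :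
    gChi G ≤ k * (gOmega G + 1) := by
  set w := gOmega G with hw
  have hcol : ∀ {u v : V}, G.Adj u v →
      ((fun x => (c x, (⟨hgt G r c x - 1, by
        have := hgt_le G r c x; omega⟩ : Fin (w + 1)))) u ≠
       (fun x => (c x, (⟨hgt G r c x - 1, by
        have := hgt_le G r c x; omega⟩ : Fin (w + 1)))) v) := by
    intro u v hadj heq
    simp only [Prod.mk.injEq, Fin.mk.injEq] at heq
    obtain ⟨hcc, hh⟩ := heq
    have h1 := one_le_hgt G r c u
    have h2 := one_le_hgt G r c v
    have hne : u ≠ v := hadj.ne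
    have heqh : hgt G r c u = hgt G r c v := by omega
    rcases sto_trich hr u v with h | h | h
    · exact absurd heqh (Nat.ne_of_lt (hgt_lt G r hr c hc hcc h hadj))
    · exact hne h
    · exact absurd heqh.symm (Nat.ne_of_lt (hgt_lt G r hr c hc hcc.symm h hadj.symm))
  have C : G.Coloring (Fin k × Fin (w + 1)) := SimpleGraph.Coloring.mk _ hcol
  have := gChi_le C.colorable
  simpa using this

end ChiKey

/-- The class of `H`-free tournaments is χ⃗-bounded if and only if the class of ordered graphs
containing no ordered backedge graph of `H` as an induced ordered subgraph is χ-bounded. -/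
theorem stmt_15 (W : Type) [Fintype W] (H : Tournament W) :
    ChiBinding H ↔
      (∃ f : ℕ → ℕ, ∀ (V : Type) [Fintype V] (G : SimpleGraph V) (r : V → V → Prop),
        IsStrictTotalOrder V r →
        (¬ ∃ rH : W → W → Prop, IsStrictTotalOrder W rH ∧
            OrderedContains (H.toDig.backedge rH) rH G r) →
        gChi G ≤ f (gOmega G)) := by
  constructor
  · -- ChiBinding → ordered χ-bounded
    rintro ⟨f, hf⟩
    refine ⟨fun n => ((Finset.range (n + 1)).sup f) * (n + 1), ?_⟩
    intro V _ G r hr havoid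
    set T := ofOrdered G r hr with hT
    have hfree : HFree H T := hfree_ofOrdered H G hr havoid
    have hdichi : T.toDig.dichi ≤ f T.toDig.cliqueNum := hf V T hfree
    -- an acyclic partition with dichi T parts
    have hnonempty : {n | ∃ c : V → Fin n, ∀ i, T.toDig.AcyclicOn {v | c v = i}}.Nonempty := by
      classical
      obtain ⟨e⟩ := Fintype.truncEquivFin V |>.nonempty
      refine ⟨Fintype.card V, e, fun i v hv => ?_⟩
      have hstep : ∀ x y : V, ¬ (x ∈ {v | e v = i} ∧ y ∈ {v | e v = i} ∧ T.Adj x y) := by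
        rintro x y ⟨hx, hy, hadj⟩
        have : x = y := e.injective (hx.trans hy.symm)
        exact T.irrefl x (this ▸ hadj)
      cases hv with
      | single h => exact hstep _ _ h
      | tail _ h => exact hstep _ _ h
    obtain ⟨c, hc⟩ := Nat.sInf_mem hnonempty
    have hchik : gChi G ≤ T.toDig.dichi * (gOmega G + 1) := chi_key G r hr c hc
    have hcliq : T.toDig.cliqueNum ≤ gOmega G :=
      Nat.sInf_le ⟨r, hr, congrArg gOmega (backedge_ofOrdered G r hr)⟩
    have hfsup : f T.toDig.cliqueNum ≤ (Finset.range (gOmega G + 1)).sup f :=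
      Finset.le_sup (Finset.mem_range.mpr (by omega))
    calc gChi G ≤ T.toDig.dichi * (gOmega G + 1) := hchik
      _ ≤ f T.toDig.cliqueNum * (gOmega G + 1) := Nat.mul_le_mul_right _ hdichi
      _ ≤ ((Finset.range (gOmega G + 1)).sup f) * (gOmega G + 1) :=
          Nat.mul_le_mul_right _ hfsup
  · -- ordered χ-bounded → ChiBinding
    rintro ⟨f, hf⟩
    refine ⟨f, ?_⟩
    intro V _ T hfree
    have hnonempty : {m | ∃ r : V → V → Prop, IsStrictTotalOrder V r ∧
        gOmega (T.toDig.backedge r) = m}.Nonempty := by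
      obtain ⟨r, hr⟩ := exists_sto (V := V)
      exact ⟨gOmega (T.toDig.backedge r), r, hr, rfl⟩
    obtain ⟨r, hr, hre⟩ := Nat.sInf_mem hnonempty
    have havoid := avoid_of_hfree H T hr hfree
    have h1 : gChi (T.toDig.backedge r) ≤ f (gOmega (T.toDig.backedge r)) :=
      hf V (T.toDig.backedge r) r hr havoid
    calc T.toDig.dichi ≤ gChi (T.toDig.backedge r) := dichi_le_gChi_backedge T hr
      _ ≤ f (gOmega (T.toDig.backedge r)) := h1
      _ = f T.toDig.cliqueNum := by rw [hre]; rfl
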